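/- Let G : (ℝᵐ,0) → (ℝᵖ,0), m ≥ p ≥ 2, be a non-constant analytic map germ with isolated singular value (Sing G ⊆ G⁻¹(0)) which is ρ-regular (tame). Then the germ of the image of G at the origin equals (ℝᵖ,0): for every sufficiently small ε > 0 the image G(B_ε) contains an open neighborhood of 0 in ℝᵖ. -/

import Mathlib

open Metric Set

/-- The singular set of a map `G : ℝᵐ → ℝᵖ`: points where the derivative has rank `< p`. -/
noncomputable def singSet {m p : ℕ}
    (G : EuclideanSpace ℝ (Fin m) → EuclideanSpace ℝ (Fin p)) :
    Set (EuclideanSpace ℝ (Fin m)) :=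
  {x | LinearMap.rank
      ((fderiv ℝ G x : EuclideanSpace ℝ (Fin m) →L[ℝ] EuclideanSpace ℝ (Fin p)) :
        EuclideanSpace ℝ (Fin m) →ₗ[ℝ] EuclideanSpace ℝ (Fin p)) < (p : Cardinal)}

/-- The Milnor set of `G`: points that are singular for `G`, or where the gradient of the
distance function `ρ(x) = ‖x‖` lies in the span of the gradients of the components of `G`. -/
noncomputable def milnorSet {m p : ℕ}
    (G : EuclideanSpace ℝ (Fin m) → EuclideanSpace ℝ (Fin p)) :
    Set (EuclideanSpace ℝ (Fin m)) :=
  {x | x ∈ singSet G ∨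
    gradient (fun y : EuclideanSpace ℝ (Fin m) => ‖y‖) x ∈
      Submodule.span ℝ (Set.range fun i : Fin p =>
        gradient (fun y : EuclideanSpace ℝ (Fin m) => G y i) x)}

/-- `G` is ρ-regular (tame): as germs at `0`,
`closure (M(G) \ G⁻¹(0)) ∩ G⁻¹(0) ⊆ {0}`. -/
def rhoRegular {m p : ℕ}
    (G : EuclideanSpace ℝ (Fin m) → EuclideanSpace ℝ (Fin p)) : Prop :=
  ∃ ε₀ > (0 : ℝ),
    closure (milnorSet G \ G ⁻¹' {0}) ∩ G ⁻¹' {0} ∩ ball 0 ε₀ ⊆ {0}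

section AuxStmt10
open Topology Filter

lemma surj_of_not_singSet {m p : ℕ}
    (G : EuclideanSpace ℝ (Fin m) → EuclideanSpace ℝ (Fin p))
    {x : EuclideanSpace ℝ (Fin m)} (hx : x ∉ singSet G) :
    Function.Surjective (fderiv ℝ G x) := by
  simp only [singSet, Set.mem_setOf_eq, not_lt] at hx
  set f : EuclideanSpace ℝ (Fin m) →ₗ[ℝ] EuclideanSpace ℝ (Fin p) :=
    ((fderiv ℝ G x : EuclideanSpace ℝ (Fin m) →L[ℝ] EuclideanSpace ℝ (Fin p)) :
      EuclideanSpace ℝ (Fin m) →ₗ[ℝ] EuclideanSpace ℝ (Fin p)) with hf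
  have hle : LinearMap.rank f ≤ (p : Cardinal) := by
    refine le_trans (Submodule.rank_le (LinearMap.range f)) ?_
    rw [← Module.finrank_eq_rank, finrank_euclideanSpace_fin]
  have heq : LinearMap.rank f = (p : Cardinal) := le_antisymm hle hx
  have hfin : Module.finrank ℝ (LinearMap.range f) = p := by
    have : ((Module.finrank ℝ (LinearMap.range f) : ℕ) : Cardinal) = (p : Cardinal) := by
      rw [Module.finrank_eq_rank]; exact heq
    exact_mod_cast this
  have htop : LinearMap.range f = ⊤ :=
    Submodule.eq_top_of_finrank_eq (by rw [hfin, finrank_euclideanSpace_fin])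
  have hsurj : Function.Surjective f := LinearMap.range_eq_top.1 htop
  exact hsurj

lemma sum_single_eq {p : ℕ} (w : EuclideanSpace ℝ (Fin p)) :
    ∑ i, w i • EuclideanSpace.single i (1:ℝ) = w := by
  have := (EuclideanSpace.basisFun (Fin p) ℝ).toBasis.sum_repr w
  simpa [EuclideanSpace.basisFun_repr] using this

lemma mem_milnorSet_of_extr {m p : ℕ}
    {G : EuclideanSpace ℝ (Fin m) → EuclideanSpace ℝ (Fin p)}
    (hGan : ∀ x, AnalyticAt ℝ G x) {x : EuclideanSpace ℝ (Fin m)}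
    (hx0 : x ≠ 0) (hsurj : Function.Surjective (fderiv ℝ G x))
    (hextr : IsLocalExtrOn (fun y : EuclideanSpace ℝ (Fin m) => ‖y‖) {y | G y = G x} x) :
    x ∈ milnorSet G := by
  have hf' : HasStrictFDerivAt G (fderiv ℝ G x) x := (hGan x).hasStrictFDerivAt
  have hφ' : HasStrictFDerivAt (fun y : EuclideanSpace ℝ (Fin m) => ‖y‖)
      (fderiv ℝ (fun y : EuclideanSpace ℝ (Fin m) => ‖y‖) x) x :=
    (contDiffAt_norm ℝ (n := 2) hx0).hasStrictFDerivAt two_ne_zero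
  obtain ⟨Λ, Λ₀, hne, hall⟩ := hextr.exists_linear_map_of_hasStrictFDerivAt hf' hφ'
  have hΛ₀ : Λ₀ ≠ 0 := by
    rintro rfl
    apply hne
    have hΛ0 : Λ = 0 := by
      ext v
      obtain ⟨u, hu⟩ := hsurj v
      have h := hall u
      rw [zero_smul, add_zero] at h
      simpa [hu] using h
    simp [hΛ0]
  refine Or.inr ?_
  rw [Submodule.mem_span_range_iff_exists_fun]
  refine ⟨fun i => -(Λ₀⁻¹ * Λ (EuclideanSpace.single i 1)), ?_⟩
  have hGd : HasFDerivAt G (fderiv ℝ G x) x := hf'.hasFDerivAt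
  have hc : ∀ i : Fin p, fderiv ℝ (fun y => G y i) x
      = (EuclideanSpace.proj i : EuclideanSpace ℝ (Fin p) →L[ℝ] ℝ).comp (fderiv ℝ G x) := by
    intro i
    exact (((EuclideanSpace.proj i : EuclideanSpace ℝ (Fin p) →L[ℝ] ℝ).hasFDerivAt).comp
      x hGd).fderiv
  unfold gradient
  simp only [hc]
  simp only [← map_smul, ← map_sum]
  congr 1
  ext v
  have h2 := hall v
  have h3 : (fderiv ℝ (fun y : EuclideanSpace ℝ (Fin m) => ‖y‖) x) v
      = -(Λ₀⁻¹) * Λ ((fderiv ℝ G x) v) := by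
    rw [smul_eq_mul] at h2
    field_simp
    linear_combination h2
  have h1 : Λ ((fderiv ℝ G x) v) = ∑ i, ((fderiv ℝ G x) v i) * Λ (EuclideanSpace.single i 1) := by
    conv_lhs => rw [← sum_single_eq ((fderiv ℝ G x) v)]
    rw [map_sum]
    simp [smul_eq_mul]
  simp only [ContinuousLinearMap.coe_sum', Finset.sum_apply, ContinuousLinearMap.coe_smul',
    Pi.smul_apply, ContinuousLinearMap.coe_comp', Function.comp_apply,
    PiLp.proj_apply, smul_eq_mul]
  rw [h3, h1, neg_mul, Finset.mul_sum]
  rw [← Finset.sum_neg_distrib]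
  apply Finset.sum_congr rfl
  intro i _
  ring

theorem stmt10_aux {m p : ℕ} (hp : 2 ≤ p) (hpm : p ≤ m)
    (G : EuclideanSpace ℝ (Fin m) → EuclideanSpace ℝ (Fin p))
    (hGan : ∀ x, AnalyticAt ℝ G x) (hG0 : G 0 = 0)
    (hnc : ¬ ∀ᶠ x in nhds (0 : EuclideanSpace ℝ (Fin m)), G x = 0)
    (hGsing : singSet G ⊆ G ⁻¹' {0})
    (hGreg : ∃ ε₀ > (0 : ℝ),
      closure (milnorSet G \ G ⁻¹' {0}) ∩ G ⁻¹' {0} ∩ ball 0 ε₀ ⊆ {0}) :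
    ∃ ε₀ > (0 : ℝ), ∀ ε, 0 < ε → ε ≤ ε₀ →
      ∃ δ > (0 : ℝ), ball (0 : EuclideanSpace ℝ (Fin p)) δ ⊆ G '' ball 0 ε := by
  obtain ⟨ε₀, hε₀, hreg⟩ := hGreg
  have hGcont : Continuous G := continuous_iff_continuousAt.2 fun x => (hGan x).continuousAt
  refine ⟨ε₀/2, by positivity, fun ε hε hεle => ?_⟩
  have hεε₀ : ε < ε₀ := lt_of_le_of_lt hεle (by linarith)
  -- Step 1: find δ such that Milnor points in the annulus have large image
  obtain ⟨δ, hδpos, hδ⟩ : ∃ δ > (0:ℝ), ∀ x, x ∈ milnorSet G → G x ≠ 0 → ‖x‖ ≤ ε →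
      ‖G x‖ < δ → ‖x‖ < ε/2 := by
    by_contra hcon
    push_neg at hcon
    choose xf h1 h2 h3 h4 h5 using fun n : ℕ => hcon (1/(n+1)) (by positivity)
    obtain ⟨y, hy, φ, hφmono, hconv⟩ :=
      (isCompact_closedBall (0 : EuclideanSpace ℝ (Fin m)) ε).tendsto_subseq
        (fun n => mem_closedBall_zero_iff.2 (h3 n))
    have hGy : G y = 0 := by
      have ht : Filter.Tendsto (fun n => G (xf (φ n))) Filter.atTop (𝓝 (G y)) :=
        (hGcont.tendsto y).comp hconv
      have ht0 : Filter.Tendsto (fun n => G (xf (φ n))) Filter.atTop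
          (𝓝 (0 : EuclideanSpace ℝ (Fin p))) := by
        apply squeeze_zero_norm (fun n => ?_) tendsto_one_div_add_atTop_nhds_zero_nat
        calc ‖G (xf (φ n))‖ ≤ 1/(φ n + 1) := le_of_lt (h4 (φ n))
          _ ≤ 1/(n+1) := by
              apply one_div_le_one_div_of_le
              · positivity
              · exact_mod_cast Nat.succ_le_succ hφmono.le_apply
      exact tendsto_nhds_unique ht ht0
    have hyc : y ∈ closure (milnorSet G \ G ⁻¹' {0}) :=
      mem_closure_of_tendsto hconv (Filter.Eventually.of_forall fun n => ⟨h1 _, h2 _⟩)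
    have hym : ε/2 ≤ ‖y‖ := by
      have hn : Filter.Tendsto (fun n => ‖xf (φ n)‖) Filter.atTop (𝓝 ‖y‖) :=
        (continuous_norm.tendsto y).comp hconv
      exact ge_of_tendsto hn (Filter.Eventually.of_forall fun n => h5 (φ n))
    have hy0 : y = 0 := hreg ⟨⟨hyc, by simp [Set.mem_preimage, hGy]⟩, by
      rw [mem_ball_zero_iff]
      exact lt_of_le_of_lt (mem_closedBall_zero_iff.1 hy) hεε₀⟩
    rw [hy0] at hym
    simp at hym
    linarith
  -- Step 2: open sets U and V
  set U : Set (EuclideanSpace ℝ (Fin p)) :=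
    {v | v ≠ 0 ∧ ∃ x, ‖x‖ < ε/2 ∧ G x = v} with hU
  set V : Set (EuclideanSpace ℝ (Fin p)) :=
    (G '' closedBall 0 (ε/2))ᶜ with hV
  have hUopen : IsOpen U := by
    rw [isOpen_iff_mem_nhds]
    rintro v ⟨hv0, x, hx, hGx⟩
    have hxsing : x ∉ singSet G := fun hs => hv0 (by rw [← hGx]; exact hGsing hs)
    have hsurj := surj_of_not_singSet G hxsing
    have hmap : Filter.map G (𝓝 x) = 𝓝 v := by
      rw [← hGx]
      exact (hGan x).hasStrictFDerivAt.map_nhds_eq_of_surj (LinearMap.range_eq_top.2 hsurj)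
    have himg : G '' ball 0 (ε/2) ∈ 𝓝 v := by
      rw [← hmap]
      exact Filter.image_mem_map (isOpen_ball.mem_nhds (mem_ball_zero_iff.2 hx))
    filter_upwards [himg, compl_singleton_mem_nhds hv0] with w hw hw0
    obtain ⟨z, hz, rfl⟩ := hw
    exact ⟨hw0, z, mem_ball_zero_iff.1 hz, rfl⟩
  have hVopen : IsOpen V :=
    (((isCompact_closedBall _ _).image hGcont).isClosed).isOpen_compl
  have hdisj : Disjoint U V := by
    rw [Set.disjoint_left]
    rintro v ⟨hv0, x, hx, hGx⟩ hvV
    exact hvV ⟨x, mem_closedBall_zero_iff.2 hx.le, hGx⟩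
  -- Step 3: the punctured ball P is preconnected
  set P : Set (EuclideanSpace ℝ (Fin p)) := ball 0 δ \ {0} with hP
  have hrank : 1 < Module.rank ℝ (EuclideanSpace ℝ (Fin p)) := by
    rw [← Module.finrank_eq_rank, finrank_euclideanSpace_fin]
    exact_mod_cast (by omega : 1 < p)
  have hPconn : IsPreconnected P := by
    have himage : P = (fun z : ℝ × EuclideanSpace ℝ (Fin p) => z.1 • z.2) ''
        (Ioo (0:ℝ) δ ×ˢ sphere (0:EuclideanSpace ℝ (Fin p)) 1) := by
      ext v
      constructor
      · rintro ⟨hvb, hv0'⟩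
        have hv0 : v ≠ 0 := hv0'
        rw [mem_ball_zero_iff] at hvb
        refine ⟨(‖v‖, ‖v‖⁻¹ • v), ⟨⟨norm_pos_iff.2 hv0, hvb⟩, ?_⟩, ?_⟩
        · rw [mem_sphere_zero_iff_norm, norm_smul]
          simp [norm_ne_zero_iff.2 hv0]
        · simp [smul_smul, mul_inv_cancel₀ (norm_ne_zero_iff.2 hv0)]
      · rintro ⟨⟨t, u⟩, ⟨⟨ht0, htδ⟩, hu⟩, rfl⟩
        rw [mem_sphere_zero_iff_norm] at hu
        constructor
        · rw [mem_ball_zero_iff, norm_smul, hu, mul_one, Real.norm_eq_abs, abs_of_pos ht0]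
          exact htδ
        · simp only [mem_singleton_iff, smul_eq_zero, not_or]
          refine ⟨ne_of_gt ht0, ?_⟩
          intro h
          rw [h, norm_zero] at hu
          norm_num at hu
    rw [himage]
    exact (((isConnected_Ioo hδpos).prod (isConnected_sphere hrank 0 zero_le_one)).image _
      continuous_smul.continuousOn).isPreconnected
  -- Step 4: P ⊆ U ∪ V
  have hPsub : P ⊆ U ∪ V := by
    rintro v ⟨hvb, hv0'⟩
    have hv0 : v ≠ 0 := hv0'
    by_cases hvV : v ∈ V
    · exact Or.inr hvV
    left
    rw [hV, Set.notMem_compl_iff] at hvV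
    obtain ⟨x₁, hx₁, hGx₁⟩ := hvV
    rw [mem_closedBall_zero_iff] at hx₁
    have hKc : IsCompact (G ⁻¹' {v} ∩ closedBall 0 ε) :=
      (isCompact_closedBall _ _).inter_left (IsClosed.preimage hGcont isClosed_singleton)
    have hKne : (G ⁻¹' {v} ∩ closedBall 0 ε).Nonempty :=
      ⟨x₁, by simp [Set.mem_preimage, hGx₁], mem_closedBall_zero_iff.2 (by linarith)⟩
    obtain ⟨x₀, hx₀K, hmin⟩ := hKc.exists_isMinOn hKne continuous_norm.continuousOn
    obtain ⟨hx₀v, hx₀b⟩ := hx₀K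
    have hGx₀ : G x₀ = v := hx₀v
    have hx₀le : ‖x₀‖ ≤ ε/2 := by
      have := isMinOn_iff.1 hmin x₁
        ⟨by simp [Set.mem_preimage, hGx₁], mem_closedBall_zero_iff.2 (by linarith)⟩
      exact le_trans this hx₁
    have hx₀0 : x₀ ≠ 0 := fun h => hv0 (by rw [← hGx₀, h, hG0])
    have hextr : IsLocalExtrOn (fun y : EuclideanSpace ℝ (Fin m) => ‖y‖)
        {y | G y = G x₀} x₀ := by
      left
      have hball : ∀ᶠ y in nhdsWithin x₀ {y | G y = G x₀}, y ∈ ball x₀ (ε - ‖x₀‖) :=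
        eventually_nhdsWithin_of_eventually_nhds
          (isOpen_ball.eventually_mem (mem_ball_self (by linarith)))
      filter_upwards [hball, self_mem_nhdsWithin] with y hy hyG
      have hyε : ‖y‖ ≤ ε := by
        have h1 : ‖y - x₀‖ < ε - ‖x₀‖ := mem_ball_iff_norm.1 hy
        calc ‖y‖ = ‖y - x₀ + x₀‖ := by rw [sub_add_cancel]
          _ ≤ ‖y - x₀‖ + ‖x₀‖ := norm_add_le _ _
          _ ≤ ε := by linarith
      refine isMinOn_iff.1 hmin y ⟨?_, mem_closedBall_zero_iff.2 hyε⟩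
      have : G y = G x₀ := hyG
      simp [Set.mem_preimage, this, hGx₀]
    have hx₀sing : x₀ ∉ singSet G := fun hs => hv0 (by rw [← hGx₀]; exact hGsing hs)
    have hmem := mem_milnorSet_of_extr hGan hx₀0 (surj_of_not_singSet G hx₀sing) hextr
    have hlt := hδ x₀ hmem (by rw [hGx₀]; exact hv0) (mem_closedBall_zero_iff.1 hx₀b)
      (by rw [hGx₀]; exact mem_ball_zero_iff.1 hvb)
    exact ⟨hv0, x₀, hlt, hGx₀⟩
  -- Step 5: P ∩ U is nonempty
  have hPUne : (P ∩ U).Nonempty := by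
    have h1 : ∀ᶠ x in 𝓝 (0 : EuclideanSpace ℝ (Fin m)), G x ∈ ball 0 δ :=
      (hGcont.tendsto 0).eventually_mem (by rw [hG0]; exact ball_mem_nhds _ hδpos)
    have h2 : ∀ᶠ x in 𝓝 (0 : EuclideanSpace ℝ (Fin m)), x ∈ ball 0 (ε/2) :=
      ball_mem_nhds _ (by positivity)
    obtain ⟨x, hx0, hxδ, hxε⟩ :=
      ((Filter.not_eventually.1 hnc).and_eventually (h1.and h2)).exists
    refine ⟨G x, ⟨⟨hxδ, by simp [hx0]⟩, hx0, x, mem_ball_zero_iff.1 hxε, rfl⟩⟩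
  -- Conclusion
  have hPU : P ⊆ U := hPconn.subset_left_of_subset_union hUopen hVopen hdisj hPsub hPUne
  refine ⟨δ, hδpos, fun v hv => ?_⟩
  by_cases hv0 : v = 0
  · exact ⟨0, mem_ball_zero_iff.2 (by simpa using hε), by rw [hG0, hv0]⟩
  · obtain ⟨-, x, hx, hGx⟩ := hPU ⟨hv, by simp [hv0]⟩
    exact ⟨x, mem_ball_zero_iff.2 (by linarith), hGx⟩


end AuxStmt10

/-- Let `G : (ℝᵐ,0) → (ℝᵖ,0)`, `m ≥ p ≥ 2`, be a non-constant analytic map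
germ with isolated singular value (`Sing G ⊆ G⁻¹(0)`) which is ρ-regular (tame). Then the
germ of `Im G` at the origin equals `(ℝᵖ,0)`: for every sufficiently small `ε > 0` the image
`G(B_ε)` contains an open neighbourhood of `0` in `ℝᵖ`. -/
theorem stmt10 {m p : ℕ} (hp : 2 ≤ p) (hpm : p ≤ m)
    (G : EuclideanSpace ℝ (Fin m) → EuclideanSpace ℝ (Fin p))
    (hGan : ∀ x, AnalyticAt ℝ G x) (hG0 : G 0 = 0)
    (hnc : ¬ ∀ᶠ x in nhds (0 : EuclideanSpace ℝ (Fin m)), G x = 0)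
    (hGsing : singSet G ⊆ G ⁻¹' {0})
    (hGreg : rhoRegular G) :
    ∃ ε₀ > (0 : ℝ), ∀ ε, 0 < ε → ε ≤ ε₀ →
      ∃ δ > (0 : ℝ), ball (0 : EuclideanSpace ℝ (Fin p)) δ ⊆ G '' ball 0 ε :=
  stmt10_aux hp hpm G hGan hG0 hnc hGsing hGreg
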